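/- Let T : ℝ^m → ℝ^m be continuous, monotone (⟨T(x)−T(y), x−y⟩ ≥ 0 for all x,y), and coercive (⟨T(x), x⟩/‖x‖ → ∞ as ‖x‖ → ∞). Then T is surjective: for every g ∈ ℝ^m there exists u ∈ ℝ^m with T(u) = g. If T is additionally strictly monotone, then T is bijective. -/

import Mathlib

open RealInnerProductSpace Filter Metric MeasureTheory ContinuousLinearMap
open scoped Topology Convolution

variable {E : Type*} [NormedAddCommGroup E] [InnerProductSpace ℝ E] [CompleteSpace E]

set_option maxHeartbeats 1000000 in
lemma exists_zero_of_strong (S : E → E) (ε : ℝ) (hε : 0 < ε)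
    (hm : ∀ x y, ε * ‖x - y‖ ^ 2 ≤ ⟪S x - S y, x - y⟫)
    (hlip : ∀ R : ℝ, 0 < R → ∃ L : NNReal, LipschitzOnWith L S (closedBall 0 R)) :
    ∃ x, S x = 0 := by
  set c : ℝ := ‖S 0‖ with hc
  have hc0 : 0 ≤ c := norm_nonneg _
  obtain ⟨R, hR1, hcR⟩ : ∃ R : ℝ, 1 ≤ R ∧ c ≤ ε * R / 4 := by
    refine ⟨4 * c / ε + 1, le_add_of_nonneg_left (by positivity), ?_⟩
    have h5 : ε * (4 * c / ε) ≤ ε * (4 * c / ε + 1) :=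
      mul_le_mul_of_nonneg_left (by linarith) hε.le
    have h6 : ε * (4 * c / ε) = 4 * c := by field_simp
    linarith
  have hR0 : (0:ℝ) < R := lt_of_lt_of_le one_pos hR1
  obtain ⟨L, hL⟩ := hlip R hR0
  obtain ⟨L', hL'1, hLL'⟩ : ∃ L' : ℝ, 1 ≤ L' ∧ (L:ℝ) ≤ L' :=
    ⟨max (L:ℝ) 1, le_max_right _ _, le_max_left _ _⟩
  have hL'0 : (0:ℝ) < L' := lt_of_lt_of_le one_pos hL'1
  obtain ⟨M, hM1, hMge⟩ : ∃ M : ℝ, 1 ≤ M ∧ c + L' * R ≤ M := ⟨c + L' * R, by nlinarith, le_refl _⟩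
  have hM0 : (0:ℝ) < M := lt_of_lt_of_le one_pos hM1
  obtain ⟨lam, hlam0, hlam1, hlamL, hlamM, hlamε⟩ :
      ∃ lam : ℝ, 0 < lam ∧ lam ≤ R/(2*M) ∧ lam * L'^2 ≤ ε ∧ lam * M^2 ≤ ε*R^2/8 ∧ lam * ε ≤ 1/2 := by
    refine ⟨min (min (R/(2*M)) (ε*R^2/(8*M^2))) (min (ε/L'^2) (1/(2*ε))),
      lt_min (lt_min (by positivity) (by positivity)) (lt_min (by positivity) (by positivity)),
      le_trans (min_le_left _ _) (min_le_left _ _), ?_, ?_, ?_⟩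
    · have hlam3 : min (min (R/(2*M)) (ε*R^2/(8*M^2))) (min (ε/L'^2) (1/(2*ε))) ≤ ε/L'^2 :=
        le_trans (min_le_right _ _) (min_le_left _ _)
      have h7 := mul_le_mul_of_nonneg_right hlam3 (by positivity : (0:ℝ) ≤ L'^2)
      have h8 : ε / L'^2 * L'^2 = ε := by field_simp
      linarith
    · have hlam2 : min (min (R/(2*M)) (ε*R^2/(8*M^2))) (min (ε/L'^2) (1/(2*ε))) ≤ ε*R^2/(8*M^2) :=
        le_trans (min_le_left _ _) (min_le_right _ _)
      have h16 := mul_le_mul_of_nonneg_right hlam2 (by positivity : (0:ℝ) ≤ M^2)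
      have h17 : ε*R^2/(8*M^2) * M^2 = ε*R^2/8 := by field_simp
      linarith
    · have hlam4 : min (min (R/(2*M)) (ε*R^2/(8*M^2))) (min (ε/L'^2) (1/(2*ε))) ≤ 1/(2*ε) :=
        le_trans (min_le_right _ _) (min_le_right _ _)
      have h7 := mul_le_mul_of_nonneg_right hlam4 hε.le
      have h8 : 1/(2*ε) * ε = 1/2 := by field_simp
      linarith
  -- norm bound on the ball
  have hSb : ∀ x ∈ closedBall (0:E) R, ‖S x‖ ≤ M := by
    intro x hx
    have h0 : (0:E) ∈ closedBall (0:E) R := mem_closedBall_self hR0.le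
    have hd := hL.dist_le_mul x hx 0 h0
    rw [dist_eq_norm, dist_eq_norm, sub_zero] at hd
    have hxR : ‖x‖ ≤ R := by simpa [mem_closedBall, dist_eq_norm] using hx
    have e : S x = (S x - S 0) + S 0 := by abel
    have h13 : ‖S x‖ ≤ ‖S x - S 0‖ + c := by
      calc ‖S x‖ = ‖(S x - S 0) + S 0‖ := by rw [← e]
      _ ≤ ‖S x - S 0‖ + c := norm_add_le _ _
    have h14 : (L:ℝ) * ‖x‖ ≤ L' * R := mul_le_mul hLL' hxR (norm_nonneg x) hL'0.le
    linarith
  set F : E → E := fun x => x - lam • S x with hFdef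
  -- contraction estimate
  have key : ∀ x ∈ closedBall (0:E) R, ∀ y ∈ closedBall (0:E) R,
      ‖F x - F y‖^2 ≤ (1 - lam*ε) * ‖x - y‖^2 := by
    intro x hx y hy
    have hd := hL.dist_le_mul x hx y hy
    rw [dist_eq_norm, dist_eq_norm] at hd
    have hFxy : F x - F y = (x - y) - lam • (S x - S y) := by
      simp only [hFdef, smul_sub]; abel
    rw [hFxy, norm_sub_sq_real]
    have h1 : ⟪x - y, lam • (S x - S y)⟫ = lam * ⟪S x - S y, x - y⟫ := by
      rw [real_inner_smul_right, real_inner_comm]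
    have h2 : ‖lam • (S x - S y)‖^2 = lam^2 * ‖S x - S y‖^2 := by
      rw [norm_smul, Real.norm_eq_abs, abs_of_pos hlam0, mul_pow]
    rw [h1, h2]
    have h3 := hm x y
    have h4' : ‖S x - S y‖ ≤ L' * ‖x - y‖ :=
      hd.trans (mul_le_mul_of_nonneg_right hLL' (norm_nonneg _))
    have h4 : ‖S x - S y‖^2 ≤ L'^2 * ‖x - y‖^2 := by
      have := mul_le_mul h4' h4' (norm_nonneg _) (by positivity)
      calc ‖S x - S y‖^2 = ‖S x - S y‖ * ‖S x - S y‖ := sq (‖S x - S y‖) ▸ by ring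
      _ ≤ (L' * ‖x - y‖) * (L' * ‖x - y‖) := this
      _ = L'^2 * ‖x - y‖^2 := by ring
    have p1 : lam * (ε * ‖x - y‖^2) ≤ lam * ⟪S x - S y, x - y⟫ :=
      mul_le_mul_of_nonneg_left h3 hlam0.le
    have p2 : lam^2 * ‖S x - S y‖^2 ≤ lam^2 * (L'^2 * ‖x - y‖^2) :=
      mul_le_mul_of_nonneg_left h4 (sq_nonneg _)
    have p4 : lam * (lam * L'^2) * ‖x - y‖^2 ≤ lam * ε * ‖x - y‖^2 :=
      mul_le_mul_of_nonneg_right (mul_le_mul_of_nonneg_left hlamL hlam0.le) (sq_nonneg _)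
    nlinarith [p1, p2, p4]
  -- maps ball to ball
  have hmaps : Set.MapsTo F (closedBall (0:E) R) (closedBall (0:E) R) := by
    intro x hx
    have hxR : ‖x‖ ≤ R := by simpa [mem_closedBall, dist_eq_norm] using hx
    have hSx := hSb x hx
    simp only [mem_closedBall, dist_eq_norm, sub_zero]
    by_cases hcase : ‖x‖ ≤ R/2
    · have h15 : ‖F x‖ ≤ ‖x‖ + lam * ‖S x‖ := by
        calc ‖F x‖ ≤ ‖x‖ + ‖lam • S x‖ := norm_sub_le _ _
        _ = ‖x‖ + lam * ‖S x‖ := by rw [norm_smul, Real.norm_eq_abs, abs_of_pos hlam0]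
      have h5 : lam * ‖S x‖ ≤ (R/(2*M)) * M :=
        mul_le_mul hlam1 hSx (norm_nonneg _) (by positivity)
      have h6 : (R/(2*M)) * M = R/2 := by field_simp
      linarith
    · push_neg at hcase
      have hx2 : R/2 ≤ ‖x‖ := hcase.le
      have hFsq : ‖F x‖^2 = ‖x‖^2 - 2 * (lam * ⟪x, S x⟫) + lam^2 * ‖S x‖^2 := by
        simp only [hFdef]
        rw [norm_sub_sq_real, real_inner_smul_right, norm_smul, Real.norm_eq_abs,
          abs_of_pos hlam0, mul_pow]
      have hinner : ε * ‖x‖^2 - c * ‖x‖ ≤ ⟪x, S x⟫ := by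
        have h6 := hm x 0
        simp only [sub_zero] at h6
        have h7 : ⟪S x - S 0, x⟫ = ⟪S x, x⟫ - ⟪S 0, x⟫ := inner_sub_left _ _ _
        have h8 : |⟪S 0, x⟫| ≤ c * ‖x‖ := by
          simpa [hc] using abs_real_inner_le_norm (S 0) x
        have h9 : -(c * ‖x‖) ≤ ⟪S 0, x⟫ := neg_le_of_abs_le h8
        have h10 : ⟪x, S x⟫ = ⟪S x, x⟫ := real_inner_comm _ _
        rw [h7] at h6
        rw [h10]; linarith
      have hRx : ε * R ≤ ε * (2*‖x‖) := mul_le_mul_of_nonneg_left (by linarith) hε.le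
      have hcx : c * ‖x‖ ≤ ε * ‖x‖^2 / 2 := by
        nlinarith [mul_le_mul_of_nonneg_right hcR (norm_nonneg x),
          mul_le_mul_of_nonneg_right hRx (norm_nonneg x)]
      have hsq : R^2/4 ≤ ‖x‖^2 := by
        nlinarith [mul_le_mul hx2 hx2 (by positivity : (0:ℝ) ≤ R/2) (norm_nonneg x)]
      have q0 : ε * R^2 / 8 ≤ ⟪x, S x⟫ := by
        nlinarith [mul_le_mul_of_nonneg_left hsq (by positivity : (0:ℝ) ≤ ε/2)]
      have r1 : ‖S x‖^2 ≤ M^2 := by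
        nlinarith [mul_le_mul hSx hSx (norm_nonneg (S x)) hM0.le]
      have r2 : lam^2 * ‖S x‖^2 ≤ lam^2 * M^2 := mul_le_mul_of_nonneg_left r1 (sq_nonneg _)
      have r4 : lam^2 * M^2 ≤ lam * (ε*R^2/8) := by
        have := mul_le_mul_of_nonneg_left hlamM hlam0.le
        calc lam^2 * M^2 = lam * (lam * M^2) := by ring
        _ ≤ lam * (ε*R^2/8) := this
      have q1 : lam * (ε*R^2/8) ≤ lam * ⟪x, S x⟫ := mul_le_mul_of_nonneg_left q0 hlam0.le
      have s1 : ‖x‖^2 ≤ R^2 := by nlinarith [mul_le_mul hxR hxR (norm_nonneg x) hR0.le]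
      have hFR : ‖F x‖^2 ≤ R^2 := by
        nlinarith [hFsq, mul_nonneg hlam0.le (show (0:ℝ) ≤ ε*R^2/8 by positivity)]
      have := Real.sqrt_le_sqrt hFR
      rwa [Real.sqrt_sq (norm_nonneg _), Real.sqrt_sq hR0.le] at this
  -- contraction constant
  set k : ℝ := Real.sqrt (1 - lam * ε) with hkdef
  have hk0 : 0 ≤ k := Real.sqrt_nonneg _
  have hk1 : k < 1 := by
    have h18 : Real.sqrt (1 - lam*ε) < Real.sqrt 1 :=
      Real.sqrt_lt_sqrt (by linarith) (by nlinarith)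
    rw [Real.sqrt_one] at h18; exact h18
  set K : NNReal := ⟨k, hk0⟩ with hKdef
  have hcontr : ContractingWith K (hmaps.restrict F _ _) := by
    constructor
    · exact_mod_cast hk1
    · apply LipschitzWith.of_dist_le_mul
      rintro ⟨x, hx⟩ ⟨y, hy⟩
      rw [Subtype.dist_eq, Subtype.dist_eq]
      simp only [Set.MapsTo.val_restrict_apply]
      rw [dist_eq_norm, dist_eq_norm]
      have hkey := key x hx y hy
      have h11 : ‖F x - F y‖ ≤ k * ‖x - y‖ := by
        have := Real.sqrt_le_sqrt hkey
        rwa [Real.sqrt_sq (norm_nonneg _), Real.sqrt_mul (by nlinarith) _,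
          Real.sqrt_sq (norm_nonneg _)] at this
      exact h11
  obtain ⟨y, hyball, hyfix, -⟩ := hcontr.exists_fixedPoint'
    isClosed_closedBall.isComplete hmaps (mem_closedBall_self hR0.le) (edist_ne_top _ _)
  refine ⟨y, ?_⟩
  have hfix : y - lam • S y = y := hyfix
  have h12 : lam • S y = 0 := sub_eq_self.mp hfix
  rcases smul_eq_zero.mp h12 with h | h
  · exact absurd h (ne_of_gt hlam0)
  · exact h


lemma lipschitzOnBall_of_contDiff {E F : Type*} [NormedAddCommGroup E] [NormedSpace ℝ E]
    [NormedAddCommGroup F] [NormedSpace ℝ F] [FiniteDimensional ℝ E] (f : E → F) (hf : ContDiff ℝ 1 f) (R : ℝ) :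
    ∃ L : NNReal, LipschitzOnWith L f (closedBall 0 R) := by
  obtain ⟨C, hC⟩ := (isCompact_closedBall (0:E) R).exists_bound_of_continuousOn
    (hf.continuous_fderiv one_ne_zero).continuousOn
  refine ⟨Real.toNNReal C, ?_⟩
  refine Convex.lipschitzOnWith_of_nnnorm_fderiv_le
    (fun x _ => (hf.differentiable one_ne_zero).differentiableAt) ?_ (convex_closedBall 0 R)
  intro x hx
  rw [← NNReal.coe_le_coe, coe_nnnorm, Real.coe_toNNReal']
  exact le_max_of_le_left (hC x hx)

section conv

variable {m : ℕ}
local notation "G" => EuclideanSpace ℝ (Fin m)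

lemma conv_integrand_integrable (T : G → G) (hcont : Continuous T)
    (φ : ContDiffBump (0 : EuclideanSpace ℝ (Fin m))) (z : G) :
    Integrable (fun t => φ.normed volume t • T (z - t)) volume := by
  have hc1 : Continuous (fun t => φ.normed volume t • T (z - t)) :=
    (φ.continuous_normed (μ := volume)).smul (hcont.comp (continuous_const.sub continuous_id))
  have hc2 : HasCompactSupport (fun t => φ.normed volume t • T (z - t)) := by
    apply HasCompactSupport.mono (φ.hasCompactSupport_normed (μ := volume))
    intro t ht
    simp only [Function.mem_support, ne_eq] at ht ⊢
    intro h; exact ht (by rw [h, zero_smul])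
  exact hc1.integrable_of_hasCompactSupport hc2

lemma conv_mono (T : G → G) (hcont : Continuous T)
    (hmono : ∀ x y, 0 ≤ ⟪T x - T y, x - y⟫) (φ : ContDiffBump (0 : EuclideanSpace ℝ (Fin m))) (x y : G) :
    0 ≤ ⟪(φ.normed volume ⋆[lsmul ℝ ℝ, volume] T) x
        - (φ.normed volume ⋆[lsmul ℝ ℝ, volume] T) y, x - y⟫ := by
  have hx := conv_integrand_integrable T hcont φ x
  have hy := conv_integrand_integrable T hcont φ y
  have e1 : (φ.normed volume ⋆[lsmul ℝ ℝ, volume] T) x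
      - (φ.normed volume ⋆[lsmul ℝ ℝ, volume] T) y
      = ∫ t, φ.normed volume t • (T (x - t) - T (y - t)) ∂volume := by
    rw [convolution_def, convolution_def]
    simp only [lsmul_apply]
    rw [← integral_sub hx hy]
    simp [smul_sub]
  rw [e1, real_inner_comm]
  have e2 : ⟪x - y, ∫ t, φ.normed volume t • (T (x - t) - T (y - t)) ∂volume⟫
      = ∫ t, ⟪x - y, φ.normed volume t • (T (x - t) - T (y - t))⟫ ∂volume := by
    have hint : Integrable (fun t => φ.normed volume t • (T (x - t) - T (y - t))) volume := by
      refine (hx.sub hy).congr (ae_of_all _ fun t => ?_)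
      simp [smul_sub]
    exact ((innerSL ℝ (x - y)).integral_comp_comm hint).symm
  rw [e2]
  apply integral_nonneg
  intro t
  simp only [Pi.zero_apply, real_inner_smul_right]
  apply mul_nonneg (φ.nonneg_normed t)
  have := hmono (x - t) (y - t)
  rw [real_inner_comm]
  simpa [sub_sub_sub_cancel_right] using this

end conv


set_option maxHeartbeats 1000000 in
theorem browder_minty_finite_dim {m : ℕ}
    (T : EuclideanSpace ℝ (Fin m) → EuclideanSpace ℝ (Fin m))
    (hcont : Continuous T)
    (hmono : ∀ x y, 0 ≤ ⟪T x - T y, x - y⟫)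
    (hcoer : Tendsto (fun x : EuclideanSpace ℝ (Fin m) => ⟪T x, x⟫ / ‖x‖)
      (comap norm atTop) atTop) :
    Function.Surjective T ∧
      ((∀ x y, x ≠ y → 0 < ⟪T x - T y, x - y⟫) → Function.Bijective T) := by
  have hsurj : Function.Surjective T := by
    intro g
    -- mollifiers
    set Φ : ℕ → ContDiffBump (0 : EuclideanSpace ℝ (Fin m)) := fun n =>
      ⟨((n:ℝ)+1)⁻¹/2, ((n:ℝ)+1)⁻¹, by positivity, half_lt_self (by positivity)⟩ with hΦdef
    set Tn : ℕ → EuclideanSpace ℝ (Fin m) → EuclideanSpace ℝ (Fin m) := fun n => (Φ n).normed volume ⋆[lsmul ℝ ℝ, volume] T with hTndef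
    have hTnC : ∀ n, ContDiff ℝ 1 (Tn n) := fun n =>
      ((Φ n).hasCompactSupport_normed).contDiff_convolution_left (lsmul ℝ ℝ)
        ((Φ n).contDiff_normed) (hcont.locallyIntegrable)
    have hmonoTn : ∀ (n : ℕ) (x y : EuclideanSpace ℝ (Fin m)), 0 ≤ ⟪Tn n x - Tn n y, x - y⟫ := fun n x y =>
      conv_mono T hcont hmono (Φ n) x y
    -- approximate solutions
    have hsol : ∀ n : ℕ, ∃ v : EuclideanSpace ℝ (Fin m), Tn n v + ((n:ℝ)+1)⁻¹ • v - g = 0 := by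
      intro n
      apply exists_zero_of_strong _ (((n:ℝ)+1)⁻¹) (by positivity)
      · intro v w
        have e : (Tn n v + ((n:ℝ)+1)⁻¹ • v - g) - (Tn n w + ((n:ℝ)+1)⁻¹ • w - g)
            = (Tn n v - Tn n w) + ((n:ℝ)+1)⁻¹ • (v - w) := by
          rw [smul_sub]; abel
        rw [e, inner_add_left, real_inner_smul_left, real_inner_self_eq_norm_sq]
        have := hmonoTn n v w
        linarith
      · intro R hR
        apply lipschitzOnBall_of_contDiff
        exact ((hTnC n).add (contDiff_id.const_smul _)).sub contDiff_const
    choose x hx using hsol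
    have hxn : ∀ n, Tn n (x n) + ((n:ℝ)+1)⁻¹ • x n = g := fun n => sub_eq_zero.mp (hx n)
    -- coercivity radius
    have hco := hcoer.eventually (eventually_ge_atTop (‖g‖ + 2))
    rw [eventually_comap] at hco
    obtain ⟨R₀, hR₀⟩ := eventually_atTop.mp hco
    set R : ℝ := max R₀ 1 with hRdef
    have hRpos : (0:ℝ) < R := lt_of_lt_of_le one_pos (le_max_right _ _)
    have hcoR : ∀ v : EuclideanSpace ℝ (Fin m), ‖v‖ = R → (‖g‖ + 2) * R ≤ ⟪T v, v⟫ := by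
      intro v hv
      have h1 := hR₀ ‖v‖ (by rw [hv]; exact le_max_left _ _) v rfl
      rw [hv, le_div_iff₀ hRpos] at h1
      linarith
    -- basic limit
    have hbase : Tendsto (fun n : ℕ => ((n:ℝ)+1)⁻¹) atTop (𝓝 0) := by
      simpa [one_div] using tendsto_one_div_add_atTop_nhds_zero_nat (𝕜 := ℝ)
    have hconvlim : ∀ (s : ℕ → ℕ), Tendsto s atTop atTop → ∀ (z : ℕ → EuclideanSpace ℝ (Fin m)) (z₀ : EuclideanSpace ℝ (Fin m)),
        Tendsto z atTop (𝓝 z₀) → Tendsto (fun k => Tn (s k) (z k)) atTop (𝓝 (T z₀)) := by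
      intro s hs z z₀ hz
      simp only [hTndef]
      apply ContDiffBump.convolution_tendsto_right (φ := fun k => Φ (s k)) (g := fun _ => T)
      · exact hbase.comp hs
      · exact Eventually.of_forall fun _ => hcont.aestronglyMeasurable
      · exact (hcont.tendsto z₀).comp tendsto_snd
      · exact hz
    -- a priori bound
    have hbdd : ∀ᶠ n in atTop, ‖x n‖ ≤ R := by
      by_contra hcon
      rw [Filter.not_eventually] at hcon
      have hfreq : ∃ᶠ n in atTop, R < ‖x n‖ := hcon.mono fun n hn => lt_of_not_ge hn
      obtain ⟨ψ, hψm, hψ⟩ := Filter.extraction_of_frequently_atTop hfreq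
      set y : ℕ → EuclideanSpace ℝ (Fin m) := fun k => (R / ‖x (ψ k)‖) • x (ψ k) with hydef
      have hX0 : ∀ k, (0:ℝ) < ‖x (ψ k)‖ := fun k => lt_trans hRpos (hψ k)
      have hynorm : ∀ k, ‖y k‖ = R := by
        intro k
        rw [hydef]
        simp only [norm_smul, Real.norm_eq_abs]
        rw [abs_of_pos (div_pos hRpos (hX0 k)), div_mul_cancel₀ _ (ne_of_gt (hX0 k))]
      have hkey : ∀ k, 2 ≤ ‖Tn (ψ k) (y k) - T (y k)‖ := by
        intro k
        set n := ψ k with hndef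
        set X := x (ψ k) with hXdef
        have hXR : R < ‖X‖ := hψ k
        have hX0' : (0:ℝ) < ‖X‖ := hX0 k
        have h0 := hmonoTn n X (y k)
        have hXy : X - y k = (1 - R/‖X‖) • X := by
          rw [hydef]; rw [sub_smul, one_smul]
        have hcpos : (0:ℝ) < 1 - R/‖X‖ := by
          rw [sub_pos, div_lt_one hX0']; exact hXR
        rw [hXy, real_inner_smul_right] at h0
        have h2 : 0 ≤ ⟪Tn n X - Tn n (y k), X⟫ := by nlinarith
        have hTnX : Tn n X = g - ((n:ℝ)+1)⁻¹ • X := eq_sub_of_add_eq (hxn n)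
        have h2' : ⟪Tn n (y k), X⟫ ≤ ⟪Tn n X, X⟫ := by
          rw [inner_sub_left] at h2; linarith
        have h3 : ⟪Tn n X, X⟫ ≤ ⟪g, X⟫ := by
          rw [hTnX, inner_sub_left, real_inner_smul_left, real_inner_self_eq_norm_sq]
          have hpos : (0:ℝ) ≤ ((n:ℝ)+1)⁻¹ := by positivity
          nlinarith [mul_nonneg hpos (sq_nonneg ‖X‖)]
        have h4 : ⟪g, X⟫ ≤ ‖g‖ * ‖X‖ := real_inner_le_norm g X
        have h5 : ⟪Tn n (y k), y k⟫ ≤ R * ‖g‖ := by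
          have e1 : ⟪Tn n (y k), y k⟫ = (R/‖X‖) * ⟪Tn n (y k), X⟫ := by
            conv_lhs => rw [hydef]
            rw [real_inner_smul_right]
          rw [e1]
          have h6 : ⟪Tn n (y k), X⟫ ≤ ‖g‖ * ‖X‖ := le_trans (le_trans h2' h3) h4
          have h7 := mul_le_mul_of_nonneg_left h6 (le_of_lt (div_pos hRpos hX0'))
          have e2 : R/‖X‖ * (‖g‖ * ‖X‖) = R * ‖g‖ := by
            field_simp
          linarith
        have h6 : (‖g‖ + 2) * R ≤ ⟪T (y k), y k⟫ := hcoR (y k) (hynorm k)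
        have h7 : 2 * R ≤ ⟪T (y k) - Tn n (y k), y k⟫ := by
          rw [inner_sub_left]; linarith
        have h8 : ⟪T (y k) - Tn n (y k), y k⟫ ≤ ‖T (y k) - Tn n (y k)‖ * R := by
          have := real_inner_le_norm (T (y k) - Tn n (y k)) (y k)
          rwa [hynorm k] at this
        have h9 : 2 ≤ ‖T (y k) - Tn n (y k)‖ := by
          have h10 : 2 * R ≤ ‖T (y k) - Tn n (y k)‖ * R := le_trans h7 h8
          exact le_of_mul_le_mul_right (by linarith [h10]) hRpos
        rwa [norm_sub_rev] at h9
      have hyball : ∀ k, y k ∈ closedBall (0 : EuclideanSpace ℝ (Fin m)) R := by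
        intro k
        simp only [mem_closedBall, dist_eq_norm, sub_zero]
        rw [hynorm k]
      obtain ⟨y₀, -, σ, hσm, hσt⟩ := (isCompact_closedBall (0 : EuclideanSpace ℝ (Fin m)) R).tendsto_subseq hyball
      have hψσ : Tendsto (fun k => ψ (σ k)) atTop atTop := (hψm.comp hσm).tendsto_atTop
      have h1 := hconvlim (fun k => ψ (σ k)) hψσ (fun k => y (σ k)) y₀ hσt
      have h2 := (hcont.tendsto y₀).comp hσt
      have h3 : Tendsto (fun k => ‖Tn (ψ (σ k)) (y (σ k)) - T (y (σ k))‖) atTop (𝓝 0) := by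
        simpa using (h1.sub h2).norm
      have h4 := h3.eventually (gt_mem_nhds (by norm_num : (0:ℝ) < 2))
      obtain ⟨k, hk⟩ := h4.exists
      exact absurd (hkey (σ k)) (not_le.mpr hk)
    -- pass to the limit
    obtain ⟨N, hN⟩ := eventually_atTop.mp hbdd
    have hzball : ∀ k : ℕ, x (N + k) ∈ closedBall (0 : EuclideanSpace ℝ (Fin m)) R := by
      intro k
      simp only [mem_closedBall, dist_eq_norm, sub_zero]
      exact hN _ (Nat.le_add_right N k)
    obtain ⟨u, -, σ, hσm, hσt⟩ := (isCompact_closedBall (0 : EuclideanSpace ℝ (Fin m)) R).tendsto_subseq hzball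
    set s : ℕ → ℕ := fun k => N + σ k with hsdef
    have hs : Tendsto s atTop atTop := by
      apply tendsto_atTop_mono (fun k => le_trans hσm.le_apply (Nat.le_add_left _ _))
      exact tendsto_id
    have h1 := hconvlim s hs (fun k => x (s k)) u hσt
    have h2 : Tendsto (fun k => ((s k : ℝ)+1)⁻¹ • x (s k)) atTop (𝓝 ((0:ℝ) • u)) :=
      Tendsto.smul (hbase.comp hs) hσt
    have h5 : Tendsto (fun k => Tn (s k) (x (s k)) + ((s k:ℝ)+1)⁻¹ • x (s k)) atTop
        (𝓝 (T u + (0:ℝ) • u)) := h1.add h2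
    have h6 : ∀ k, Tn (s k) (x (s k)) + ((s k:ℝ)+1)⁻¹ • x (s k) = g := fun k => hxn (s k)
    have h7 : T u + (0:ℝ) • u = g :=
      tendsto_nhds_unique (h5.congr h6) tendsto_const_nhds
    exact ⟨u, by simpa using h7⟩
  refine ⟨hsurj, fun hstrict => ⟨fun a b hab => ?_, hsurj⟩⟩
  by_contra hne
  have h := hstrict a b hne
  rw [hab, sub_self] at h
  simp at h
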